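/- The integral ∫₀¹ t(1−t) ln(t) ln(1−t) dt equals (37 − 3π²)/108. -/

import Mathlib

open Real MeasureTheory Set Filter Topology

lemma integral_pow_mul_mul_log (k : ℕ) :
    ∫ t in (0:ℝ)..1, t ^ k * (t * Real.log t) = -(1 / ((k:ℝ) + 2) ^ 2) := by
  have hk : ((k:ℝ) + 2) ≠ 0 := by positivity
  have hcont : ContinuousOn
      (fun t : ℝ => t ^ (k+1) * (t * Real.log t) / ((k:ℝ)+2) - t ^ (k+2) / ((k:ℝ)+2) ^ 2)
      (Icc 0 1) :=
    ((((continuous_pow (k+1)).mul Real.continuous_mul_log).div_const _).sub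
      ((continuous_pow (k+2)).div_const _)).continuousOn
  have hderiv : ∀ x ∈ Ioo (0:ℝ) 1,
      HasDerivAt (fun t : ℝ => t ^ (k+1) * (t * Real.log t) / ((k:ℝ)+2) - t ^ (k+2) / ((k:ℝ)+2) ^ 2)
        (x ^ k * (x * Real.log x)) x := by
    intro x hx
    have hx0 : x ≠ 0 := ne_of_gt hx.1
    have hp : HasDerivAt (fun t : ℝ => t ^ (k+2)) (((k:ℝ)+2) * x ^ (k+1)) x := by
      simpa using hasDerivAt_pow (k+2) x
    have hl : HasDerivAt Real.log x⁻¹ x := Real.hasDerivAt_log hx0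
    have h := ((hp.mul hl).div_const ((k:ℝ)+2)).sub (hp.div_const (((k:ℝ)+2)^2))
    have hfeq : (fun t : ℝ => t ^ (k+1) * (t * Real.log t) / ((k:ℝ)+2) - t ^ (k+2) / ((k:ℝ)+2) ^ 2)
        = fun t : ℝ => t ^ (k+2) * Real.log t / ((k:ℝ)+2) - t ^ (k+2) / ((k:ℝ)+2) ^ 2 := by
      funext t; ring
    rw [hfeq]
    refine h.congr_deriv ?_
    field_simp
    ring
  have hint : IntervalIntegrable (fun t : ℝ => t ^ k * (t * Real.log t)) volume 0 1 :=
    ((continuous_pow k).mul Real.continuous_mul_log).intervalIntegrable 0 1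
  have key := intervalIntegral.integral_eq_sub_of_hasDerivAt_of_le zero_le_one hcont hderiv hint
  simpa using key

lemma hasSum_telescope_aux {f : ℕ → ℝ} (hmono : ∀ n, f (n+1) ≤ f n)
    (h0 : Tendsto f atTop (𝓝 0)) :
    HasSum (fun n => f n - f (n + 1)) (f 0) := by
  rw [hasSum_iff_tendsto_nat_of_nonneg (fun n => sub_nonneg.2 (hmono n))]
  simp only [Finset.sum_range_sub' f]
  simpa using tendsto_const_nhds.sub h0

lemma hasSum_shift_inv (k : ℕ) :
    HasSum (fun n : ℕ => 1/((n:ℝ)+((k:ℝ)+1)) - 1/((n:ℝ)+((k:ℝ)+2))) (1/((k:ℝ)+1)) := by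
  have hg0 : Tendsto (fun n : ℕ => 1/((n:ℝ)+((k:ℝ)+1))) atTop (𝓝 0) := by
    have h := (tendsto_one_div_add_atTop_nhds_zero_nat (𝕜 := ℝ)).comp (tendsto_add_atTop_nat k)
    have heq : ((fun m : ℕ => 1/((m:ℝ)+1)) ∘ (fun n => n + k))
        = fun n : ℕ => 1/((n:ℝ)+((k:ℝ)+1)) := by
      funext n; simp [Function.comp]; ring_nf
    rwa [heq] at h
  have hmono : ∀ n : ℕ, 1/(((n+1:ℕ):ℝ)+((k:ℝ)+1)) ≤ 1/((n:ℝ)+((k:ℝ)+1)) := by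
    intro n
    apply one_div_le_one_div_of_le
    · positivity
    · push_cast; linarith
  have h := hasSum_telescope_aux (f := fun n : ℕ => 1/((n:ℝ)+((k:ℝ)+1))) hmono hg0
  have heq : (fun n : ℕ => 1/((n:ℝ)+((k:ℝ)+1)) - 1/(((n+1:ℕ):ℝ)+((k:ℝ)+1)))
      = fun n : ℕ => 1/((n:ℝ)+((k:ℝ)+1)) - 1/((n:ℝ)+((k:ℝ)+2)) := by
    funext n; push_cast; ring_nf
  rw [heq] at h
  simpa using h

lemma hasSum_basel_shift :
    HasSum (fun n : ℕ => 1/((n:ℝ)+3)^2) (Real.pi^2/6 - 5/4) := by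
  have h := (hasSum_nat_add_iff' (f := fun n : ℕ => (1:ℝ)/(n:ℝ)^2) 3).2 hasSum_zeta_two
  have heq : (fun n : ℕ => (1:ℝ)/(((n+3:ℕ)):ℝ)^2) = fun n : ℕ => 1/((n:ℝ)+3)^2 := by
    funext n; push_cast; ring_nf
  rw [heq] at h
  rw [show (Real.pi^2/6 - 5/4 : ℝ) = Real.pi^2/6 - ∑ i ∈ Finset.range 3, (1:ℝ)/(i:ℝ)^2 by
    norm_num [Finset.sum_range_succ]]
  exact h

lemma hasSum_basel_shift4 :
    HasSum (fun n : ℕ => 1/((n:ℝ)+4)^2) (Real.pi^2/6 - 49/36) := by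
  have h := (hasSum_nat_add_iff' (f := fun n : ℕ => (1:ℝ)/(n:ℝ)^2) 4).2 hasSum_zeta_two
  have heq : (fun n : ℕ => (1:ℝ)/(((n+4:ℕ)):ℝ)^2) = fun n : ℕ => 1/((n:ℝ)+4)^2 := by
    funext n; push_cast; ring_nf
  rw [heq] at h
  rw [show (Real.pi^2/6 - 49/36 : ℝ) = Real.pi^2/6 - ∑ i ∈ Finset.range 4, (1:ℝ)/(i:ℝ)^2 by
    norm_num [Finset.sum_range_succ]]
  exact h

lemma hasSum_c :
    HasSum (fun n : ℕ => 1/((n:ℝ)+1) * (1/((n:ℝ)+3)^2 - 1/((n:ℝ)+4)^2))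
      (37/108 - Real.pi^2/36) := by
  have h0 := hasSum_shift_inv 0
  have h1 := hasSum_shift_inv 1
  have h2 := hasSum_shift_inv 2
  norm_num at h0 h1 h2
  have ht : HasSum (fun n : ℕ => 1/((n:ℝ)+1) - 1/((n:ℝ)+3)) (3/2 : ℝ) := by
    have h := h0.add h1
    have heq : (fun n : ℕ => (((n:ℝ)+1)⁻¹ - ((n:ℝ)+2)⁻¹) + (((n:ℝ)+2)⁻¹ - ((n:ℝ)+3)⁻¹))
        = fun n : ℕ => 1/((n:ℝ)+1) - 1/((n:ℝ)+3) := by funext n; ring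
    rw [heq] at h
    convert h using 1; norm_num
  have hs : HasSum (fun n : ℕ => 1/((n:ℝ)+1) - 1/((n:ℝ)+4)) (11/6 : ℝ) := by
    have h := (h0.add h1).add h2
    have heq : (fun n : ℕ => ((((n:ℝ)+1)⁻¹ - ((n:ℝ)+2)⁻¹) + (((n:ℝ)+2)⁻¹ - ((n:ℝ)+3)⁻¹))
          + (((n:ℝ)+3)⁻¹ - ((n:ℝ)+4)⁻¹))
        = fun n : ℕ => 1/((n:ℝ)+1) - 1/((n:ℝ)+4) := by funext n; ring
    rw [heq] at h
    convert h using 1; norm_num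
  have hu := hasSum_basel_shift
  have hv := hasSum_basel_shift4
  have h := (((ht.mul_left (1/4)).sub (hs.mul_left (1/9))).sub (hu.mul_left (1/2))).add
    (hv.mul_left (1/3))
  have heq : (fun n : ℕ => ((1/4) * (1/((n:ℝ)+1) - 1/((n:ℝ)+3)) - (1/9) * (1/((n:ℝ)+1) - 1/((n:ℝ)+4))
        - (1/2) * (1/((n:ℝ)+3)^2)) + (1/3) * (1/((n:ℝ)+4)^2))
      = fun n : ℕ => 1/((n:ℝ)+1) * (1/((n:ℝ)+3)^2 - 1/((n:ℝ)+4)^2) := by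
    funext n
    have h3 : ((n:ℝ)+1) ≠ 0 := by positivity
    have h4 : ((n:ℝ)+3) ≠ 0 := by positivity
    have h5 : ((n:ℝ)+4) ≠ 0 := by positivity
    field_simp
    ring
  rw [heq] at h
  rw [show (37/108 - Real.pi^2/36 : ℝ) = 1/4*(3/2) - 1/9*(11/6) - 1/2*(Real.pi^2/6-5/4)
    + 1/3*(Real.pi^2/6-49/36) by ring]
  exact h

/-- `∫₀¹ t(1−t) ln t ln(1−t) dt = (37 − 3π²)/108`. -/
theorem integral_mul_log_mul_log_one_sub :
    ∫ t in (0 : ℝ)..1, t * (1 - t) * Real.log t * Real.log (1 - t)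
      = (37 - 3 * Real.pi ^ 2) / 108 := by
  set F : ℕ → ℝ → ℝ := fun n t => (1 - t) * (t * Real.log t) * (-(t ^ (n + 1)) / ((n:ℝ) + 1))
    with hF
  set c : ℕ → ℝ := fun n => 1/((n:ℝ)+1) * (1/((n:ℝ)+3)^2 - 1/((n:ℝ)+4)^2) with hc
  have hcont : ∀ n, Continuous (F n) := fun n =>
    ((continuous_const.sub continuous_id).mul Real.continuous_mul_log).mul
      (((continuous_pow (n+1)).neg).div_const _)
  have hval : ∀ n, ∫ t in Ioc (0:ℝ) 1, F n t = c n := by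
    intro n
    rw [← intervalIntegral.integral_of_le zero_le_one]
    have hFeq : F n = fun t : ℝ =>
        (1/((n:ℝ)+1)) * (t ^ (n+2) * (t * Real.log t) - t ^ (n+1) * (t * Real.log t)) := by
      funext t; simp only [hF]; ring
    have hI1 : IntervalIntegrable (fun t : ℝ => t ^ (n+1) * (t * Real.log t)) volume 0 1 :=
      ((continuous_pow (n+1)).mul Real.continuous_mul_log).intervalIntegrable 0 1
    have hI2 : IntervalIntegrable (fun t : ℝ => t ^ (n+2) * (t * Real.log t)) volume 0 1 :=
      ((continuous_pow (n+2)).mul Real.continuous_mul_log).intervalIntegrable 0 1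
    rw [hFeq, intervalIntegral.integral_const_mul, intervalIntegral.integral_sub hI2 hI1,
      integral_pow_mul_mul_log (n+1), integral_pow_mul_mul_log (n+2), hc]
    push_cast
    ring
  have hnonneg : ∀ n, ∀ t ∈ Ioc (0:ℝ) 1, 0 ≤ F n t := by
    intro n t ht
    have hlog : Real.log t ≤ 0 := Real.log_nonpos ht.1.le ht.2
    have hrw : F n t = (1 - t) * (t * (-Real.log t)) * (t ^ (n+1) / ((n:ℝ)+1)) := by
      simp only [hF]; ring
    rw [hrw]
    have h1 : (0:ℝ) ≤ 1 - t := by linarith [ht.2]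
    have h2 : (0:ℝ) ≤ t * (-Real.log t) := mul_nonneg ht.1.le (by linarith)
    have h3 : (0:ℝ) ≤ t ^ (n+1) / ((n:ℝ)+1) := div_nonneg (pow_nonneg ht.1.le _) (by positivity)
    exact mul_nonneg (mul_nonneg h1 h2) h3
  have key : ∀ t ∈ Ioc (0:ℝ) 1,
      t * (1 - t) * Real.log t * Real.log (1 - t) = ∑' n, F n t := by
    intro t ht
    rcases eq_or_lt_of_le ht.2 with h1 | h1
    · subst h1
      simp [hF]
    · have habs : |t| < 1 := abs_lt.2 ⟨by linarith [ht.1], h1⟩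
      have h := (hasSum_pow_div_log_of_abs_lt_one habs).mul_left
        (-((1 - t) * (t * Real.log t)))
      have hfun : (fun n : ℕ => -((1 - t) * (t * Real.log t)) * (t ^ (n+1) / ((n:ℝ)+1)))
          = fun n : ℕ => F n t := by
        funext n; simp only [hF]; ring
      rw [hfun] at h
      have hv : -((1 - t) * (t * Real.log t)) * -Real.log (1 - t)
          = t * (1 - t) * Real.log t * Real.log (1 - t) := by ring
      rw [hv] at h
      exact h.tsum_eq.symm
  have hInt : ∀ n : ℕ, Integrable (F n) (volume.restrict (Ioc (0:ℝ) 1)) := fun n =>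
    (hcont n).integrableOn_Ioc
  have hNormEq : (fun n : ℕ => ∫ t in Ioc (0:ℝ) 1, ‖F n t‖) = c := by
    funext n
    rw [setIntegral_congr_fun measurableSet_Ioc
      (fun t ht => Real.norm_of_nonneg (hnonneg n t ht)), hval n]
  have hNorm : Summable fun n : ℕ => ∫ t in Ioc (0:ℝ) 1, ‖F n t‖ := by
    rw [hNormEq]; exact hasSum_c.summable
  rw [intervalIntegral.integral_of_le zero_le_one,
    setIntegral_congr_fun measurableSet_Ioc key,
    ← MeasureTheory.integral_tsum_of_summable_integral_norm hInt hNorm,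
    tsum_congr hval, hasSum_c.tsum_eq]
  ring
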